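/- Let G be a {C₃, C₄}-free graph (no cycle of length 3 or 4 as a subgraph) with maximum degree at most 3 and vertex weights a*, d*: V(G) → {0,1}. Then (G, a*, d*) admits a solution to (1,1)-Cluster Editing if and only if there exists a matching D of deletable edges of G such that every connected component C of G − D is isomorphic to P₁, P₂, or P₃, and if C ≅ P₃ then the two endpoints u, w of the path satisfy a*(u)=a*(w)=1 (note u and w are non-adjacent in G since G is triangle-free). -/

import Mathlib

open SimpleGraph

variable {V : Type*}

/-- A graph whose edge set is a matching: every vertex has at most one neighbour. -/
def IsMatchingGraph (M : SimpleGraph V) : Prop :=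
  ∀ ⦃v w w' : V⦄, M.Adj v w → M.Adj v w' → w = w'

/-- A cluster graph: every connected component is a complete graph. -/
def IsClusterGraph (G : SimpleGraph V) : Prop :=
  ∀ ⦃u v w : V⦄, G.Adj u v → G.Adj v w → u ≠ w → G.Adj u w

/-- No `C₃` (triangle) subgraph. -/
def TriangleFree (G : SimpleGraph V) : Prop :=
  ∀ ⦃u v w : V⦄, G.Adj u v → G.Adj v w → G.Adj u w → False

/-- No `C₄` subgraph. -/
def C4Free (G : SimpleGraph V) : Prop :=
  ∀ ⦃p q r s : V⦄, p ≠ r → q ≠ s →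
    G.Adj p q → G.Adj q r → G.Adj r s → G.Adj s p → False

/-- Degree of a vertex (as the cardinality of its neighbourhood). -/
noncomputable def ndeg (G : SimpleGraph V) (v : V) : ℕ := {w | G.Adj v w}.ncard

/-- Maximum degree at most `n`. -/
def MaxDegLE (G : SimpleGraph V) (n : ℕ) : Prop := ∀ v, ndeg G v ≤ n

/-- `D` is a matching of deletable edges of `G` (w.r.t. weights `d`). -/
def DelMatching (G D : SimpleGraph V) (d : V → ℕ) : Prop :=
  D ≤ G ∧ IsMatchingGraph D ∧ ∀ ⦃u v : V⦄, D.Adj u v → d u = 1 ∧ d v = 1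

/-- `A` is a matching of addable edges of the complement of `G` (w.r.t. weights `a`). -/
def AddMatching (G A : SimpleGraph V) (a : V → ℕ) : Prop :=
  A ≤ Gᶜ ∧ IsMatchingGraph A ∧ ∀ ⦃u v : V⦄, A.Adj u v → a u = 1 ∧ a v = 1

/-- `(G, a, d)` is a YES-instance of `(1,1)`-Cluster Editing (matching formulation). -/
def HasSolution (G : SimpleGraph V) (a d : V → ℕ) : Prop :=
  ∃ D A : SimpleGraph V, DelMatching G D d ∧ AddMatching G A a ∧
    IsClusterGraph ((G \ D) ⊔ A)

/-- The component `c` of `H` is a `P₁` (single vertex). -/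
def P1Comp (H : SimpleGraph V) (c : H.ConnectedComponent) : Prop :=
  ∃ v : V, c.supp = {v}

/-- The component `c` of `H` is a `P₂` (a single edge). -/
def P2Comp (H : SimpleGraph V) (c : H.ConnectedComponent) : Prop :=
  ∃ u v : V, H.Adj u v ∧ c.supp = {u, v}

/-- The component `c` of `H` is a path `u - m - w` on three vertices. -/
def P3Comp (H : SimpleGraph V) (c : H.ConnectedComponent) (u m w : V) : Prop :=
  H.Adj u m ∧ H.Adj m w ∧ u ≠ w ∧ ¬ H.Adj u w ∧ c.supp = {u, m, w}

/-- The component `c` of `H` is a chordless cycle `p - q - r - s - p` on four vertices. -/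
def C4Comp (H : SimpleGraph V) (c : H.ConnectedComponent) (p q r s : V) : Prop :=
  H.Adj p q ∧ H.Adj q r ∧ H.Adj r s ∧ H.Adj s p ∧ p ≠ r ∧ q ≠ s ∧
    ¬ H.Adj p r ∧ ¬ H.Adj q s ∧ c.supp = {p, q, r, s}

/-- Every connected component of `H` is isomorphic to `P₁`, `P₂`, `P₃` or `C₄`. -/
def GoodComponents (H : SimpleGraph V) : Prop :=
  ∀ c : H.ConnectedComponent,
    P1Comp H c ∨ P2Comp H c ∨ (∃ u m w, P3Comp H c u m w) ∨
      (∃ p q r s, C4Comp H c p q r s)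

/-- `G` contains `K_{2,3}` as a subgraph. -/
def ContainsK23 (G : SimpleGraph V) : Prop :=
  ∃ x₁ x₂ y₁ y₂ y₃ : V, x₁ ≠ x₂ ∧ y₁ ≠ y₂ ∧ y₁ ≠ y₃ ∧ y₂ ≠ y₃ ∧
    G.Adj x₁ y₁ ∧ G.Adj x₁ y₂ ∧ G.Adj x₁ y₃ ∧ G.Adj x₂ y₁ ∧ G.Adj x₂ y₂ ∧ G.Adj x₂ y₃

lemma myClusterAdj {K : SimpleGraph V} (hK : IsClusterGraph K) :
    ∀ {u v : V}, K.Reachable u v → u ≠ v → K.Adj u v := by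
  suffices h : ∀ {u v : V}, K.Walk u v → u ≠ v → K.Adj u v by
    intro u v hr hne; exact h hr.some hne
  intro u v p
  induction p with
  | nil => intro h; exact absurd rfl h
  | @cons x y z hxy p ih =>
      intro hne
      by_cases hyz : y = z
      · subst hyz; exact hxy
      · exact hK hxy (ih hyz) hne

lemma myFirstStep {K : SimpleGraph V} {u v : V} (h : K.Reachable u v) (hne : u ≠ v) :
    ∃ y, K.Adj u y ∧ K.Reachable y v := by
  obtain ⟨p⟩ := h
  cases p with
  | nil => exact absurd rfl hne
  | cons h p => exact ⟨_, h, ⟨p⟩⟩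

lemma myP3Unique {H : SimpleGraph V} {c : H.ConnectedComponent}
    {u m w u' m' w' : V} (h : P3Comp H c u m w) (h' : P3Comp H c u' m' w') :
    (u' = u ∧ w' = w) ∨ (u' = w ∧ w' = u) := by
  obtain ⟨hum, hmw, huw, hnuw, hs⟩ := h
  obtain ⟨hum', hmw', huw', hnuw', hs'⟩ := h'
  have hset : ∀ x : V, x ∈ ({u',m',w'} : Set V) ↔ x ∈ ({u,m,w} : Set V) := by
    intro x; rw [← hs, ← hs']
  have hu' := (hset u').1 (by simp)
  have hm' := (hset m').1 (by simp)
  have hw' := (hset w').1 (by simp)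
  simp only [Set.mem_insert_iff, Set.mem_singleton_iff] at hu' hm' hw'
  rcases hu' with rfl|rfl|rfl <;> rcases hm' with rfl|rfl|rfl <;>
    rcases hw' with rfl|rfl|rfl <;> simp_all [SimpleGraph.adj_comm]


/-- characterization of YES-instances for {C₃,C₄}-free graphs of
maximum degree at most 3. -/
theorem stmt_3 {V : Type*} [Fintype V] [DecidableEq V] (G : SimpleGraph V)
    (a d : V → ℕ) (ha : ∀ v, a v ≤ 1) (hd : ∀ v, d v ≤ 1)
    (hT : TriangleFree G) (hC4 : C4Free G) (hdeg : MaxDegLE G 3) :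
    HasSolution G a d ↔
      ∃ D : SimpleGraph V, DelMatching G D d ∧
        ∀ c : (G \ D).ConnectedComponent,
          P1Comp (G \ D) c ∨ P2Comp (G \ D) c ∨
          (∃ u m w, P3Comp (G \ D) c u m w ∧ a u = 1 ∧ a w = 1) := by
  constructor
  · rintro ⟨D, A, hD, hA, hclu⟩
    refine ⟨D, hD, ?_⟩
    intro c
    have hHG : (G \ D) ≤ G := sdiff_le
    have hAH : ∀ {x y : V}, A.Adj x y → ¬ (G \ D).Adj x y := by
      intro x y hxy h
      exact ((compl_adj _ _ _).1 (hA.1 hxy)).2 (hHG h)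
    have hsup : ∀ {x y : V}, x ∈ c.supp → y ∈ c.supp → x ≠ y →
        ((G \ D) ⊔ A).Adj x y := by
      intro x y hx hy hne
      rw [ConnectedComponent.mem_supp_iff] at hx hy
      exact myClusterAdj hclu
        ((ConnectedComponent.exact (hx.trans hy.symm)).mono le_sup_left) hne
    have two : ∀ {x y z : V}, ((G \ D) ⊔ A).Adj x y → ((G \ D) ⊔ A).Adj x z → y ≠ z →
        (G \ D).Adj x y ∨ (G \ D).Adj x z := by
      intro x y z h1 h2 hne
      rcases (sup_adj _ _ _ _).1 h1 with h1'|h1'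
      · exact Or.inl h1'
      · rcases (sup_adj _ _ _ _).1 h2 with h2'|h2'
        · exact Or.inr h2'
        · exact absurd (hA.2.1 h1' h2') hne
    have core : ∀ p q r s : V, p ∈ c.supp → q ∈ c.supp → r ∈ c.supp → s ∈ c.supp →
        p ≠ q → p ≠ r → p ≠ s → q ≠ r → q ≠ s → r ≠ s →
        (G \ D).Adj p q → (G \ D).Adj p r → False := by
      intro p q r s hp hq hr hs h1 h2 h3 h4 h5 h6 hpq hpr
      have hqr : ¬ (G \ D).Adj q r := fun h => hT (hHG hpq) (hHG h) (hHG hpr)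
      have hqs : (G \ D).Adj q s :=
        (two (hsup hq hr h4) (hsup hq hs h5) h6).resolve_left hqr
      have hrs : (G \ D).Adj r s :=
        (two (hsup hr hq h4.symm) (hsup hr hs h6) h5).resolve_left
          (fun h => hqr h.symm)
      exact hC4 h3 h4 (hHG hpq) (hHG hqs) (hHG hrs.symm) (hHG hpr.symm)
    have no4 : ∀ x y z w : V, x ∈ c.supp → y ∈ c.supp → z ∈ c.supp → w ∈ c.supp →
        x ≠ y → x ≠ z → x ≠ w → y ≠ z → y ≠ w → z ≠ w → False := by
      intro x y z w hx hy hz hw h1 h2 h3 h4 h5 h6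
      rcases two (hsup hx hy h1) (hsup hx hz h2) h4 with hxy|hxz
      · rcases two (hsup hx hz h2) (hsup hx hw h3) h6 with hxz|hxw
        · exact core x y z w hx hy hz hw h1 h2 h3 h4 h5 h6 hxy hxz
        · exact core x y w z hx hy hw hz h1 h3 h2 h5 h4 h6.symm hxy hxw
      · rcases two (hsup hx hy h1) (hsup hx hw h3) h5 with hxy|hxw
        · exact core x y z w hx hy hz hw h1 h2 h3 h4 h5 h6 hxy hxz
        · exact core x z w y hx hz hw hy h2 h3 h1 h6 h4.symm h5.symm hxz hxw
    obtain ⟨v, hvc⟩ := c.exists_rep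
    have hv : v ∈ c.supp := ConnectedComponent.mem_supp_iff c v |>.2 hvc
    by_cases h2 : ∃ x ∈ c.supp, x ≠ v
    · obtain ⟨x, hx, hxv⟩ := h2
      by_cases h3 : ∃ y ∈ c.supp, y ≠ v ∧ y ≠ x
      · obtain ⟨y, hy, hyv, hyx⟩ := h3
        have hsubs : c.supp = {v, x, y} := by
          ext z
          simp only [Set.mem_insert_iff, Set.mem_singleton_iff]
          constructor
          · intro hz
            by_contra hzm
            push_neg at hzm
            exact no4 v x y z hv hx hy hz hxv.symm hyv.symm hzm.1.symm
              hyx.symm hzm.2.1.symm hzm.2.2.symm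
          · rintro (rfl|rfl|rfl) <;> assumption
        have pvx := hsup hv hx (Ne.symm hxv)
        have pvy := hsup hv hy (Ne.symm hyv)
        have pxy := hsup hx hy (Ne.symm hyx)
        have hresh : ∀ (p q r : V), c.supp = {p, q, r} → c.supp = {q, p, r} := by
          intro p q r h
          rw [h]; ext z; simp only [Set.mem_insert_iff, Set.mem_singleton_iff]; tauto
        rcases (sup_adj _ _ _ _).1 pvx with h1|h1 <;> rcases (sup_adj _ _ _ _).1 pvy with h2'|h2' <;>
          rcases (sup_adj _ _ _ _).1 pxy with h3'|h3'
        · exact absurd (hT (hHG h1) (hHG h3') (hHG h2')) not_false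
        · exact Or.inr (Or.inr ⟨x, v, y, ⟨h1.symm, h2', Ne.symm hyx, hAH h3',
            hresh v x y hsubs⟩, (hA.2.2 h3').1, (hA.2.2 h3').2⟩)
        · exact Or.inr (Or.inr ⟨v, x, y, ⟨h1, h3', Ne.symm hyv, hAH h2', hsubs⟩,
            (hA.2.2 h2').1, (hA.2.2 h2').2⟩)
        · exact absurd (hA.2.1 h2'.symm h3'.symm) (Ne.symm hxv)
        · refine Or.inr (Or.inr ⟨v, y, x, ⟨h2', h3'.symm, Ne.symm hxv, hAH h1, ?_⟩,
            (hA.2.2 h1).1, (hA.2.2 h1).2⟩)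
          rw [hsubs]; ext z; simp only [Set.mem_insert_iff, Set.mem_singleton_iff]; tauto
        · exact absurd (hA.2.1 h1.symm h3') (Ne.symm hyv)
        · exact absurd (hA.2.1 h1 h2') (Ne.symm hyx)
        · exact absurd (hA.2.1 h1 h2') (Ne.symm hyx)
      · push_neg at h3
        have hsubs : c.supp = {v, x} := by
          ext z
          simp only [Set.mem_insert_iff, Set.mem_singleton_iff]
          constructor
          · intro hz
            by_cases hzv : z = v
            · exact Or.inl hzv
            · exact Or.inr (h3 z hz hzv)
          · rintro (rfl|rfl) <;> assumption
        rcases (sup_adj _ _ _ _).1 (hsup hv hx (Ne.symm hxv)) with h1|h1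
        · exact Or.inr (Or.inl ⟨v, x, h1, hsubs⟩)
        · exfalso
          have hreach : (G \ D).Reachable v x := by
            rw [ConnectedComponent.mem_supp_iff] at hv hx
            exact ConnectedComponent.exact (hv.trans hx.symm)
          obtain ⟨y, hvy, hyx⟩ := myFirstStep hreach (Ne.symm hxv)
          have hy : y ∈ c.supp := by
            rw [ConnectedComponent.mem_supp_iff] at hx ⊢
            exact (ConnectedComponent.sound hyx).trans hx
          rw [hsubs] at hy
          simp only [Set.mem_insert_iff, Set.mem_singleton_iff] at hy
          rcases hy with rfl|rfl
          · exact (G \ D).irrefl hvy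
          · exact hAH h1 hvy
    · push_neg at h2
      left
      refine ⟨v, ?_⟩
      ext z
      simp only [Set.mem_singleton_iff]
      exact ⟨fun hz => h2 z hz, fun hz => hz ▸ hv⟩
  · rintro ⟨D, hD, hcomp⟩
    have hHG : (G \ D) ≤ G := sdiff_le
    set A : SimpleGraph V := SimpleGraph.fromEdgeSet
      {e | ∃ (c : (G \ D).ConnectedComponent) (u m w : V),
        P3Comp (G \ D) c u m w ∧ a u = 1 ∧ a w = 1 ∧ e = s(u, w)} with hAdef
    have hmemA : ∀ {x y : V}, A.Adj x y → ∃ c u m w, P3Comp (G \ D) c u m w ∧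
        a u = 1 ∧ a w = 1 ∧ ((x = u ∧ y = w) ∨ (x = w ∧ y = u)) := by
      intro x y hxy
      rw [hAdef, fromEdgeSet_adj] at hxy
      simp only [Set.mem_setOf_eq] at hxy
      obtain ⟨⟨c, u, m, w, hP, hau, haw, he⟩, hne⟩ := hxy
      exact ⟨c, u, m, w, hP, hau, haw, Sym2.eq_iff.1 he⟩
    have hAG : A ≤ Gᶜ := by
      intro x y hxy
      have hne := hxy.ne
      obtain ⟨c, u, m, w, hP, hau, haw, hp⟩ := hmemA hxy
      rw [compl_adj]
      refine ⟨hne, ?_⟩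
      have hnG : ¬ G.Adj u w := fun h => hT (hHG hP.1) (hHG hP.2.1) h
      rcases hp with ⟨rfl, rfl⟩|⟨rfl, rfl⟩
      · exact hnG
      · exact fun h => hnG h.symm
    have hcompOf : ∀ {c : (G \ D).ConnectedComponent} {u m w x : V},
        P3Comp (G \ D) c u m w → (x = u ∨ x = w) →
        (G \ D).connectedComponentMk x = c := by
      intro c u m w x hP hx
      have : x ∈ c.supp := by
        rw [hP.2.2.2.2]
        rcases hx with rfl|rfl <;> simp
      exact (ConnectedComponent.mem_supp_iff c x).1 this
    have hAm : IsMatchingGraph A := by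
      intro v w w' h1 h2
      obtain ⟨c, u, m, w0, hP, _, _, hp⟩ := hmemA h1
      obtain ⟨c', u', m', w0', hP', _, _, hp'⟩ := hmemA h2
      have hc : c = c' := by
        have e1 : (G \ D).connectedComponentMk v = c :=
          hcompOf hP (by tauto)
        have e2 : (G \ D).connectedComponentMk v = c' :=
          hcompOf hP' (by tauto)
        exact e1.symm.trans e2
      subst hc
      have huniq := myP3Unique hP hP'
      have hne := hP.2.2.1
      have hne' := hP'.2.2.1
      rcases hp with ⟨e1, e2⟩|⟨e1, e2⟩ <;> rcases huniq with ⟨f1, f2⟩|⟨f1, f2⟩ <;>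
        rcases hp' with ⟨g1, g2⟩|⟨g1, g2⟩ <;> grind
    have hAa : ∀ ⦃u v : V⦄, A.Adj u v → a u = 1 ∧ a v = 1 := by
      intro x y hxy
      obtain ⟨c, u, m, w, hP, hau, haw, hp⟩ := hmemA hxy
      rcases hp with ⟨rfl, rfl⟩|⟨rfl, rfl⟩ <;> exact ⟨by assumption, by assumption⟩
    have hsupmk : ∀ {x y : V}, ((G \ D) ⊔ A).Adj x y →
        (G \ D).connectedComponentMk x = (G \ D).connectedComponentMk y := by
      intro x y hxy
      rcases (sup_adj _ _ _ _).1 hxy with h|h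
      · exact ConnectedComponent.sound h.reachable
      · obtain ⟨c, u, m, w, hP, _, _, hp⟩ := hmemA h
        have e1 : (G \ D).connectedComponentMk x = c := hcompOf hP (by tauto)
        have e2 : (G \ D).connectedComponentMk y = c := hcompOf hP (by tauto)
        exact e1.trans e2.symm
    have main : ∀ (c : (G \ D).ConnectedComponent) (x y : V),
        x ∈ c.supp → y ∈ c.supp → x ≠ y → ((G \ D) ⊔ A).Adj x y := by
      intro c x y hx hy hne
      rcases hcomp c with ⟨v, hs⟩ | ⟨p, q, hpq, hs⟩ | ⟨u, m, w, hP, hau, haw⟩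
      · rw [hs] at hx hy
        simp only [Set.mem_singleton_iff] at hx hy
        exact absurd (hx.trans hy.symm) hne
      · rw [hs] at hx hy
        simp only [Set.mem_insert_iff, Set.mem_singleton_iff] at hx hy
        rcases hx with rfl|rfl <;> rcases hy with rfl|rfl
        · exact absurd rfl hne
        · exact (sup_adj _ _ _ _).2 (Or.inl hpq)
        · exact (sup_adj _ _ _ _).2 (Or.inl hpq.symm)
        · exact absurd rfl hne
      · have hAuw : A.Adj u w := by
          rw [hAdef, fromEdgeSet_adj]
          exact ⟨⟨c, u, m, w, hP, hau, haw, rfl⟩, hP.2.2.1⟩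
        rw [hP.2.2.2.2] at hx hy
        simp only [Set.mem_insert_iff, Set.mem_singleton_iff] at hx hy
        rcases hx with rfl|rfl|rfl <;> rcases hy with rfl|rfl|rfl
        · exact absurd rfl hne
        · exact (sup_adj _ _ _ _).2 (Or.inl hP.1)
        · exact (sup_adj _ _ _ _).2 (Or.inr hAuw)
        · exact (sup_adj _ _ _ _).2 (Or.inl hP.1.symm)
        · exact absurd rfl hne
        · exact (sup_adj _ _ _ _).2 (Or.inl hP.2.1)
        · exact (sup_adj _ _ _ _).2 (Or.inr hAuw.symm)
        · exact (sup_adj _ _ _ _).2 (Or.inl hP.2.1.symm)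
        · exact absurd rfl hne
    refine ⟨D, A, hD, ⟨hAG, hAm, hAa⟩, ?_⟩
    intro x y z h1 h2 hne
    have hx : x ∈ ((G \ D).connectedComponentMk x).supp :=
      (ConnectedComponent.mem_supp_iff _ _).2 rfl
    have hz : z ∈ ((G \ D).connectedComponentMk x).supp := by
      rw [ConnectedComponent.mem_supp_iff]
      exact ((hsupmk h1).trans (hsupmk h2)).symm
    exact main _ x z hx hz hne
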